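/- arXiv:2112.14904 — 4 statements merged into one kernel-verified Lean document; each statement's English description precedes it below -/
import Mathlib

section
/- Let f : [0,1] → ℂ be continuously differentiable and let z ∈ ℂ with Re(z) > 0. Then β[(·−1/2) f′](z+1) = −β[f](z+1) + 2z·((1/4)·β[f](z) − β[f](z+1)), where (·−1/2) f′ denotes the function u ↦ (u−1/2) f′(u). -/
open MeasureTheory Set

/-- The generalized Beta function `β[f](z) = ∫₀¹ f(u) (u(1−u))^{z−1} du`. -/
noncomputable def betaFn (f : ℝ → ℂ) (z : ℂ) : ℂ :=
  ∫ u in Ioo (0:ℝ) 1, f u * ((u * (1 - u) : ℝ) : ℂ) ^ (z - 1)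

/-- For continuously differentiable `f : [0,1] → ℂ` (with derivative `f'`) and `Re z > 0`:
`β[(·−1/2) f'](z+1) = −β[f](z+1) + 2z((1/4) β[f](z) − β[f](z+1))`. -/
theorem betaFn_deriv_identity
    (f f' : ℝ → ℂ)
    (hderiv : ∀ u ∈ Icc (0:ℝ) 1, HasDerivWithinAt f (f' u) (Icc 0 1) u)
    (hf' : ContinuousOn f' (Icc 0 1))
    (z : ℂ) (hz : 0 < z.re) :
    betaFn (fun u => ((u - 1/2 : ℝ) : ℂ) * f' u) (z + 1)
      = -betaFn f (z + 1) + 2 * z * ((1/4) * betaFn f z - betaFn f (z + 1)) := by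
  have hz0 : z ≠ 0 := fun h => by simp [h] at hz
  set Fc : ℝ → ℂ := fun u => ((u * (1 - u) : ℝ) : ℂ) with hFcdef
  -- continuity of f on [0,1]
  have hfc : ContinuousOn f (Icc 0 1) := fun u hu => (hderiv u hu).continuousWithinAt
  -- continuity of u ↦ Fc u ^ z everywhere
  have hW : Continuous (fun u : ℝ => Fc u ^ z) := by
    rw [continuous_iff_continuousAt]
    intro u
    exact (Complex.continuousAt_ofReal_cpow_const _ _ (Or.inl hz)).comp
      ((continuous_id.mul (continuous_const.sub continuous_id)).continuousAt)
  -- the auxiliary function g and full product H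
  set g : ℝ → ℂ := fun u => ((u : ℂ) - 1/2) * Fc u ^ z with hgdef
  have hgc : Continuous g :=
    (Complex.continuous_ofReal.sub continuous_const).mul hW
  set H : ℝ → ℂ := fun u => f u * g u with hHdef
  -- the pieces
  set A : ℝ → ℂ := fun u => f' u * g u with hAdef
  set B : ℝ → ℂ := fun u => f u * Fc u ^ z with hBdef
  set C : ℝ → ℂ := fun u => f u * Fc u ^ (z - 1) with hCdef
  -- integrability of Fc ^ (z-1)
  have J : IntervalIntegrable (fun u => Fc u ^ (z - 1)) volume 0 1 := by
    have h0 := Complex.betaIntegral_convergent hz hz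
    rw [intervalIntegrable_iff_integrableOn_Ioo_of_le zero_le_one] at h0 ⊢
    refine h0.congr_fun (fun u hu => ?_) measurableSet_Ioo
    have h1 : (0:ℝ) ≤ u := hu.1.le
    have h2 : (0:ℝ) ≤ 1 - u := by linarith [hu.2]
    have hm := Complex.mul_cpow_ofReal_nonneg h1 h2 (z - 1)
    simp only [hFcdef]
    push_cast at hm ⊢
    rw [← hm]
  have hCint : IntervalIntegrable C volume 0 1 := by
    refine J.continuousOn_mul ?_
    rw [uIcc_of_le zero_le_one]; exact hfc
  have hBint : IntervalIntegrable B volume 0 1 := by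
    apply ContinuousOn.intervalIntegrable
    rw [uIcc_of_le zero_le_one]
    exact hfc.mul hW.continuousOn
  have hAint : IntervalIntegrable A volume 0 1 := by
    apply ContinuousOn.intervalIntegrable
    rw [uIcc_of_le zero_le_one]
    exact hf'.mul hgc.continuousOn
  have hDint : IntervalIntegrable
      (fun u => B u - 2 * z * ((1/4) * C u - B u)) volume 0 1 :=
    hBint.sub (((hCint.const_mul _).sub hBint).const_mul _)
  -- derivative of H on (0,1)
  have hHderiv : ∀ u ∈ Ioo (0:ℝ) 1,
      HasDerivAt H (A u + (B u - 2 * z * ((1/4) * C u - B u))) u := by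
    intro u hu
    have hu0 : (0:ℝ) < u := hu.1
    have hu1 : u < 1 := hu.2
    have hpos : (0:ℝ) < u * (1 - u) := mul_pos hu0 (by linarith)
    have hFne : Fc u ≠ 0 := by
      simp only [hFcdef, Ne, Complex.ofReal_eq_zero]; positivity
    -- derivative of Fc
    have hFd : HasDerivAt (fun v : ℝ => Fc v) (((1 - 2*u : ℝ) : ℂ)) u := by
      have hr : HasDerivAt (fun v : ℝ => v * (1 - v)) (1 - 2*u) u := by
        have := (hasDerivAt_id u).mul ((hasDerivAt_const u (1:ℝ)).sub (hasDerivAt_id u))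
        exact this.congr_deriv (by simp; ring)
      exact hr.ofReal_comp
    have hWd : HasDerivAt (fun v : ℝ => Fc v ^ z)
        (z * Fc u ^ (z - 1) * ((1 - 2*u : ℝ) : ℂ)) u :=
      by have := (Complex.hasStrictDerivAt_cpow_const (c := z)
          (Complex.ofReal_mem_slitPlane.2 hpos)).hasDerivAt.comp u hFd; exact this
    have hud : HasDerivAt (fun v : ℝ => ((v : ℂ) - 1/2)) 1 u := by
      simpa using ((hasDerivAt_id u).ofReal_comp).sub_const (1/2 : ℂ)
    have hgd : HasDerivAt g
        (1 * Fc u ^ z + ((u : ℂ) - 1/2) * (z * Fc u ^ (z - 1) * ((1 - 2*u : ℝ) : ℂ))) u :=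
      hud.mul hWd
    have hfd : HasDerivAt f (f' u) u :=
      (hderiv u (Ioo_subset_Icc_self hu)).hasDerivAt (Icc_mem_nhds hu0 hu1)
    have hHd : HasDerivAt H _ u := hfd.mul hgd
    convert hHd using 1
    have hsplit : Fc u ^ z = Fc u ^ (z - 1) * Fc u := by
      conv_lhs => rw [show z = z - 1 + 1 by ring]
      rw [Complex.cpow_add _ _ hFne, Complex.cpow_one]
    simp only [hAdef, hBdef, hCdef, hgdef, hFcdef]
    rw [hFcdef] at hsplit
    rw [hsplit]
    push_cast
    ring
  -- continuity of H on [0,1]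
  have hHcont : ContinuousOn H (Icc 0 1) := hfc.mul hgc.continuousOn
  -- FTC
  have int_ev := intervalIntegral.integral_eq_sub_of_hasDerivAt_of_le zero_le_one
    hHcont hHderiv (hAint.add hDint)
  have hH0 : H 0 = 0 := by
    simp [hHdef, hgdef, hFcdef, Complex.zero_cpow hz0]
  have hH1 : H 1 = 0 := by
    simp [hHdef, hgdef, hFcdef, Complex.zero_cpow hz0]
  rw [hH0, hH1, sub_zero] at int_ev
  rw [intervalIntegral.integral_add hAint hDint] at int_ev
  have key : (∫ u in (0:ℝ)..1, A u)
      = -(∫ u in (0:ℝ)..1, B u)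
        + 2 * z * ((1/4) * (∫ u in (0:ℝ)..1, C u) - (∫ u in (0:ℝ)..1, B u)) := by
    have hsub := intervalIntegral.integral_sub hBint
      (((hCint.const_mul ((1:ℂ)/4)).sub hBint).const_mul (2*z))
    rw [hsub] at int_ev
    rw [intervalIntegral.integral_const_mul,
      intervalIntegral.integral_sub (hCint.const_mul _) hBint,
      intervalIntegral.integral_const_mul] at int_ev
    linear_combination int_ev
  -- rewrite betaFn's as interval integrals
  have e1 : betaFn (fun u => ((u - 1/2 : ℝ) : ℂ) * f' u) (z + 1)
      = ∫ u in (0:ℝ)..1, A u := by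
    rw [intervalIntegral.integral_of_le zero_le_one, integral_Ioc_eq_integral_Ioo, betaFn]
    refine setIntegral_congr_fun measurableSet_Ioo (fun u hu => ?_)
    simp only [hAdef, hgdef, hFcdef, add_sub_cancel_right]
    push_cast
    ring
  have e2 : betaFn f (z + 1) = ∫ u in (0:ℝ)..1, B u := by
    rw [intervalIntegral.integral_of_le zero_le_one, integral_Ioc_eq_integral_Ioo, betaFn]
    refine setIntegral_congr_fun measurableSet_Ioo (fun u hu => ?_)
    simp only [hBdef, hFcdef, add_sub_cancel_right]
  have e3 : betaFn f z = ∫ u in (0:ℝ)..1, C u := by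
    rw [intervalIntegral.integral_of_le zero_le_one, integral_Ioc_eq_integral_Ioo, betaFn]
  rw [e1, e2, e3, key]
end

section
/- Let f : [0,1] → ℂ be continuously differentiable and let z ∈ ℂ with Re(z) > 0. Then β[f](z) = (2/z)·( (2z+1)·β[f](z+1) + β[(·−1/2) f′](z+1) ), where (·−1/2) f′ denotes the function u ↦ (u−1/2) f′(u). -/
open MeasureTheory Set

/-- For continuously differentiable `f : [0,1] → ℂ` (with derivative `f'`) and `Re z > 0`:
`β[f](z) = (2/z)((2z+1) β[f](z+1) + β[(·−1/2) f'](z+1))`. -/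
theorem betaFn_functional_equation
    (f f' : ℝ → ℂ)
    (hderiv : ∀ u ∈ Icc (0:ℝ) 1, HasDerivWithinAt f (f' u) (Icc 0 1) u)
    (hf' : ContinuousOn f' (Icc 0 1))
    (z : ℂ) (hz : 0 < z.re) :
    betaFn f z
      = (2 / z) * ((2 * z + 1) * betaFn f (z + 1)
          + betaFn (fun u => ((u - 1/2 : ℝ) : ℂ) * f' u) (z + 1)) := by
  have hz0 : z ≠ 0 := fun h => by simp [h] at hz
  have hz1 : 0 < (z + 1).re := by
    rw [Complex.add_re, Complex.one_re]; linarith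
  set W : ℝ → ℂ := fun u => ((u * (1 - u) : ℝ) : ℂ) with hWdef
  have hfc : ContinuousOn f (Icc 0 1) := fun u hu => (hderiv u hu).continuousWithinAt
  -- betaFn as an interval integral
  have hbeta : ∀ (g : ℝ → ℂ) (s : ℂ),
      betaFn g s = ∫ u in (0:ℝ)..1, g u * W u ^ (s - 1) := by
    intro g s
    rw [betaFn, intervalIntegral.integral_of_le zero_le_one,
      MeasureTheory.integral_Ioc_eq_integral_Ioo]
  -- integrability of the weight
  have hWint : ∀ s : ℂ, 0 < s.re →
      IntervalIntegrable (fun u => W u ^ (s - 1)) volume 0 1 := by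
    intro s hs
    have h := Complex.betaIntegral_convergent hs hs
    rw [intervalIntegrable_iff_integrableOn_Ioc_of_le zero_le_one] at h ⊢
    refine h.congr_fun (fun u hu => ?_) measurableSet_Ioc
    have hu0 : (0:ℝ) ≤ u := hu.1.le
    have hu1 : (0:ℝ) ≤ 1 - u := by linarith [hu.2]
    simp only [hWdef]
    rw [show ((u * (1 - u) : ℝ) : ℂ) = ((u:ℝ):ℂ) * (((1 - u : ℝ)):ℂ) by push_cast; ring,
      Complex.mul_cpow_ofReal_nonneg hu0 hu1]
    push_cast
    ring
  -- continuity of the weight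
  have hWcont : ∀ s : ℂ, 0 < s.re → ContinuousOn (fun u => W u ^ s) (Icc (0:ℝ) 1) := by
    intro s hs u hu
    have hWc : ContinuousWithinAt W (Icc (0:ℝ) 1) u := by
      apply Continuous.continuousWithinAt
      exact Complex.continuous_ofReal.comp (by continuity)
    have h0 : 0 ≤ (W u).re ∨ (W u).im ≠ 0 := by
      left
      simp only [hWdef, Complex.ofReal_re]
      nlinarith [hu.1, hu.2]
    exact (Complex.continuousAt_cpow_const_of_re_pos h0 hs).comp_continuousWithinAt hWc
  -- integrability of the three pieces
  have huIcc : uIcc (0:ℝ) 1 = Icc 0 1 := uIcc_of_le zero_le_one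
  have hIc : IntervalIntegrable (fun u => f u * W u ^ (z - 1)) volume 0 1 :=
    (hWint z hz).continuousOn_mul (huIcc ▸ hfc)
  have hzz : z + 1 - 1 = z := by ring
  have hIb : IntervalIntegrable (fun u => f u * W u ^ z) volume 0 1 := by
    have := (hWint (z+1) hz1).continuousOn_mul (huIcc ▸ hfc)
    rwa [hzz] at this
  have hIa : IntervalIntegrable (fun u => ((u - 1/2 : ℝ) : ℂ) * f' u * W u ^ z) volume 0 1 := by
    have hc : ContinuousOn (fun u : ℝ => ((u - 1/2 : ℝ) : ℂ) * f' u) (Icc (0:ℝ) 1) :=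
      (Complex.continuous_ofReal.comp (by continuity)).continuousOn.mul hf'
    have := (hWint (z+1) hz1).continuousOn_mul (huIcc ▸ hc)
    rwa [hzz] at this
  -- the function used for integration by parts
  set g : ℝ → ℂ := fun u => ((u - 1/2 : ℝ) : ℂ) * f u * W u ^ z with hgdef
  set G : ℝ → ℂ := fun u => ((u - 1/2 : ℝ) : ℂ) * f' u * W u ^ z
      + ((2*z+1) * (f u * W u ^ z) - z/2 * (f u * W u ^ (z-1))) with hGdef
  have hgcont : ContinuousOn g (Icc (0:ℝ) 1) := by
    exact (((Complex.continuous_ofReal.comp (by continuity)).continuousOn.mul hfc).mul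
      (hWcont z hz))
  have hgderiv : ∀ u ∈ Ioo (0:ℝ) 1, HasDerivAt g (G u) u := by
    intro u hu
    have hupos : 0 < u * (1 - u) := by nlinarith [hu.1, hu.2]
    have hWne : (↑(u * (1 - u)) : ℂ) ≠ 0 := Complex.ofReal_ne_zero.2 hupos.ne'
    have h1 : HasDerivAt (fun y : ℝ => ((y - 1/2 : ℝ) : ℂ)) 1 u := by
      have := ((hasDerivAt_id u).sub_const (1/2)).ofReal_comp
      simpa using this
    have h2 : HasDerivAt f (f' u) u :=
      (hderiv u (Ioo_subset_Icc_self hu)).hasDerivAt (Icc_mem_nhds hu.1 hu.2)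
    have h3 : HasDerivAt W ((1 - 2*u : ℝ) : ℂ) u := by
      have hr : HasDerivAt (fun y : ℝ => y * (1 - y)) (1 - 2*u) u := by
        have := (hasDerivAt_id u).mul ((hasDerivAt_const u (1:ℝ)).sub (hasDerivAt_id u))
        refine this.congr_deriv ?_
        simp only [Pi.sub_apply, id_eq]
        ring
      exact hr.ofReal_comp
    have hslit : W u ∈ Complex.slitPlane := by
      simp only [hWdef]
      exact Complex.ofReal_mem_slitPlane.2 hupos
    have h4 : HasDerivAt (fun y => W y ^ z) (z * W u ^ (z - 1) * ((1 - 2*u : ℝ) : ℂ)) u := by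
      have := ((Complex.hasStrictDerivAt_cpow_const (c := z) hslit).hasDerivAt).comp u h3
      exact this
    have h5 := ((h1.mul h2).mul h4)
    refine h5.congr_deriv ?_
    have hWz : W u ^ z = W u ^ (z - 1) * W u := by
      conv_lhs => rw [show z = z - 1 + 1 by ring]
      rw [Complex.cpow_add _ _ hWne, Complex.cpow_one]
    simp only [hGdef, Pi.mul_apply, hWz]
    simp only [hWdef]
    push_cast
    ring
  -- integration by parts: ∫ G = g 1 - g 0 = 0
  have hGint : IntervalIntegrable G volume 0 1 :=
    hIa.add ((hIb.const_mul _).sub (hIc.const_mul _))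
  have hFTC : ∫ u in (0:ℝ)..1, G u = g 1 - g 0 :=
    intervalIntegral.integral_eq_sub_of_hasDerivAt_of_le zero_le_one hgcont hgderiv hGint
  have hg0 : g 0 = 0 := by
    simp [hgdef, hWdef, Complex.zero_cpow hz0]
  have hg1 : g 1 = 0 := by
    simp [hgdef, hWdef, Complex.zero_cpow hz0]
  -- split the integral
  set Ia := ∫ u in (0:ℝ)..1, ((u - 1/2 : ℝ) : ℂ) * f' u * W u ^ z with hIadef
  set Ib := ∫ u in (0:ℝ)..1, f u * W u ^ z with hIbdef
  set Ic := ∫ u in (0:ℝ)..1, f u * W u ^ (z - 1) with hIcdef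
  have hsplit : ∫ u in (0:ℝ)..1, G u = Ia + ((2*z+1) * Ib - z/2 * Ic) := by
    rw [hGdef]
    rw [intervalIntegral.integral_add hIa ((hIb.const_mul _).sub (hIc.const_mul _)),
      intervalIntegral.integral_sub (hIb.const_mul _) (hIc.const_mul _),
      intervalIntegral.integral_const_mul, intervalIntegral.integral_const_mul]
  have hkey : Ia + ((2*z+1) * Ib - z/2 * Ic) = 0 := by
    rw [← hsplit, hFTC, hg0, hg1, sub_zero]
  -- conclude
  have hbf : betaFn f z = Ic := hbeta f z
  have hbf1 : betaFn f (z+1) = Ib := by rw [hbeta f (z+1), hzz]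
  have hbf2 : betaFn (fun u => ((u - 1/2 : ℝ) : ℂ) * f' u) (z+1) = Ia := by
    rw [hbeta _ (z+1), hzz]
  rw [hbf, hbf1, hbf2]
  field_simp
  linear_combination (-2 : ℂ) * hkey
end

section
/- Let f : [0,1] → ℂ be continuously differentiable. Then z·β[f](z) tends to 2·∫₀¹ f(u) du + 2·∫₀¹ (u−1/2) f′(u) du as z → 0 within the open right half-plane {z ∈ ℂ : Re(z) > 0}. (Equivalently, the meromorphic continuation of β[f] has a simple pole at z = 0 with this residue; by integration by parts the residue equals f(0) + f(1).) -/
open MeasureTheory Set Filter Topology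

lemma kernel_split {z : ℂ} {u : ℝ} (hu : u ∈ Ioo (0:ℝ) 1) :
    ((u * (1 - u) : ℝ) : ℂ) ^ (z - 1)
      = ((u:ℝ) : ℂ) ^ (z - 1) * (((1 - u :ℝ)) : ℂ) ^ (z - 1) := by
  rw [Complex.ofReal_mul]
  exact Complex.mul_cpow_ofReal_nonneg hu.1.le (by linarith [hu.2]) _

lemma kernel_continuousOn {z : ℂ} :
    ContinuousOn (fun u : ℝ => ((u * (1 - u) : ℝ) : ℂ) ^ (z - 1)) (Ioo (0:ℝ) 1) := by
  intro u hu
  apply ContinuousWithinAt.cpow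
  · exact (Complex.continuous_ofReal.comp
      ((continuous_id.mul (continuous_const.sub continuous_id)))).continuousWithinAt
  · exact continuousWithinAt_const
  · exact Complex.ofReal_mem_slitPlane.2 (by nlinarith [hu.1, hu.2])

lemma kernelK_integrableOn {z : ℂ} (hz : 0 < z.re) :
    IntegrableOn (fun u : ℝ => ((u * (1 - u) : ℝ) : ℂ) ^ (z - 1)) (Ioo (0:ℝ) 1) := by
  have h := ((Complex.betaIntegral_convergent hz hz).1).mono_set Ioo_subset_Ioc_self
  refine h.congr_fun (fun u hu => ?_) measurableSet_Ioo
  rw [kernel_split hu]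
  norm_num

lemma kernel_norm {z : ℂ} {u : ℝ} (hu : u ∈ Ioo (0:ℝ) 1) :
    ‖((u * (1 - u) : ℝ) : ℂ) ^ (z - 1)‖ = (u * (1 - u)) ^ (z.re - 1) := by
  rw [Complex.norm_cpow_eq_rpow_re_of_pos (by nlinarith [hu.1, hu.2])]
  simp [Complex.sub_re]

lemma mulKernel_integrableOn {z : ℂ} (hz : 0 < z.re) {g : ℝ → ℂ}
    (hg : ContinuousOn g (Icc (0:ℝ) 1)) :
    IntegrableOn (fun u : ℝ => g u * ((u * (1 - u) : ℝ) : ℂ) ^ (z - 1)) (Ioo (0:ℝ) 1) := by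
  obtain ⟨C, hC⟩ := isCompact_Icc.exists_bound_of_continuousOn hg
  refine Integrable.mono' (((kernelK_integrableOn hz).norm).const_mul C) ?_ ?_
  · exact (((hg.mono Ioo_subset_Icc_self).mul kernel_continuousOn).aestronglyMeasurable
      measurableSet_Ioo)
  · filter_upwards [ae_restrict_mem measurableSet_Ioo] with u hu
    rw [norm_mul]
    exact mul_le_mul_of_nonneg_right (hC u (Ioo_subset_Icc_self hu)) (norm_nonneg _)

lemma B1_eq {z : ℂ} :
    (∫ u in Ioo (0:ℝ) 1, ((1 - u : ℝ) : ℂ) * ((u * (1 - u) : ℝ) : ℂ) ^ (z - 1))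
      = Complex.betaIntegral z (z + 1) := by
  rw [Complex.betaIntegral, intervalIntegral.integral_of_le zero_le_one,
    integral_Ioc_eq_integral_Ioo]
  refine setIntegral_congr_fun measurableSet_Ioo (fun u hu => ?_)
  rw [kernel_split hu]
  have h1 : ((1 - u : ℝ) : ℂ) ≠ 0 := by
    simp only [ne_eq, Complex.ofReal_eq_zero]; intro h; linarith [hu.2, h]
  have : ((1 - u : ℝ) : ℂ) ^ (z + 1 - 1) = ((1 - u : ℝ) : ℂ) * ((1 - u : ℝ) : ℂ) ^ (z - 1) := by
    rw [show z + 1 - 1 = 1 + (z - 1) by ring, Complex.cpow_add _ _ h1, Complex.cpow_one]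
  push_cast
  push_cast at this
  rw [this]
  ring

lemma B2_eq {z : ℂ} :
    (∫ u in Ioo (0:ℝ) 1, ((u : ℝ) : ℂ) * ((u * (1 - u) : ℝ) : ℂ) ^ (z - 1))
      = Complex.betaIntegral (z + 1) z := by
  rw [Complex.betaIntegral, intervalIntegral.integral_of_le zero_le_one,
    integral_Ioc_eq_integral_Ioo]
  refine setIntegral_congr_fun measurableSet_Ioo (fun u hu => ?_)
  rw [kernel_split hu]
  have h1 : ((u : ℝ) : ℂ) ≠ 0 := by
    simp only [ne_eq, Complex.ofReal_eq_zero]; intro h; linarith [hu.1, h]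
  have : ((u : ℝ) : ℂ) ^ (z + 1 - 1) = ((u : ℝ) : ℂ) * ((u : ℝ) : ℂ) ^ (z - 1) := by
    rw [show z + 1 - 1 = 1 + (z - 1) by ring, Complex.cpow_add _ _ h1, Complex.cpow_one]
  push_cast
  push_cast at this
  rw [this]
  ring

lemma zmulBeta {z : ℂ} (hz : 0 < z.re) :
    z * Complex.betaIntegral z (z + 1)
      = Complex.Gamma (z + 1) ^ 2 / Complex.Gamma (z + z + 1) := by
  have hz1 : (0:ℝ) < (z + 1).re := by simp [Complex.add_re]; linarith
  have h := Complex.Gamma_mul_Gamma_eq_betaIntegral hz hz1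
  have hne : Complex.Gamma (z + (z + 1)) ≠ 0 :=
    Complex.Gamma_ne_zero_of_re_pos (by simp only [Complex.add_re, Complex.one_re]; linarith)
  have hzG : Complex.Gamma (z + 1) = z * Complex.Gamma z :=
    Complex.Gamma_add_one z (by rintro rfl; rw [Complex.zero_re] at hz; exact lt_irrefl 0 hz)
  rw [show z + z + 1 = z + (z + 1) by ring, eq_div_iff hne]
  linear_combination -z * h - Complex.Gamma (z+1) * hzG

lemma hG_continuousAt :
    ContinuousAt (fun z : ℂ => Complex.Gamma (z + 1) ^ 2 / Complex.Gamma (z + z + 1)) 0 := by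
  have hne : ∀ m : ℕ, (1 : ℂ) ≠ -m := by
    intro m h
    have := congrArg Complex.re h
    simp at this
    linarith [Nat.cast_nonneg (α := ℝ) m]
  have hc : ContinuousAt Complex.Gamma 1 := (Complex.differentiableAt_Gamma 1 hne).continuousAt
  have h1 : ContinuousAt (fun z : ℂ => Complex.Gamma (z + 1)) 0 := by
    refine ContinuousAt.comp (by simpa using hc) ?_
    exact (continuous_id.add continuous_const).continuousAt
  have h2 : ContinuousAt (fun z : ℂ => Complex.Gamma (z + z + 1)) 0 := by
    refine ContinuousAt.comp (by simpa using hc) ?_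
    exact ((continuous_id.add continuous_id).add continuous_const).continuousAt
  exact (h1.pow 2).div h2 (by simp [Complex.Gamma_one])

lemma ibp (f f' : ℝ → ℂ)
    (hderiv : ∀ u ∈ Icc (0:ℝ) 1, HasDerivWithinAt f (f' u) (Icc 0 1) u)
    (hf' : ContinuousOn f' (Icc (0:ℝ) 1)) :
    (∫ u in Ioo (0:ℝ) 1, f u) + (∫ u in Ioo (0:ℝ) 1, ((u - 1/2 : ℝ) : ℂ) * f' u)
      = (f 0 + f 1) / 2 := by
  have hfc : ContinuousOn f (Icc (0:ℝ) 1) := fun u hu => (hderiv u hu).continuousWithinAt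
  set G : ℝ → ℂ := fun u => ((u - 1/2 : ℝ) : ℂ) * f u with hGdef
  have hcoef : Continuous (fun u : ℝ => ((u - 1/2 : ℝ) : ℂ)) :=
    Complex.continuous_ofReal.comp (continuous_id.sub continuous_const)
  have hG' : ∀ x ∈ Ioo (0:ℝ) 1, HasDerivAt G (f x + ((x - 1/2 : ℝ) : ℂ) * f' x) x := by
    intro x hx
    have hfd : HasDerivAt f (f' x) x :=
      (hderiv x (Ioo_subset_Icc_self hx)).hasDerivAt (Icc_mem_nhds hx.1 hx.2)
    have h1 : HasDerivAt (fun u : ℝ => ((u : ℝ) : ℂ)) 1 x := by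
      exact Complex.ofRealCLM.hasDerivAt (x := x)
    have h2 : HasDerivAt (fun u : ℝ => ((u - 1/2 : ℝ) : ℂ)) 1 x := by
      refine (h1.sub_const (1/2 : ℂ)).congr_of_eventuallyEq ?_
      filter_upwards with u
      push_cast; ring
    have := h2.mul hfd
    simpa [hGdef, Pi.mul_def] using this.congr_deriv (by push_cast; ring)
  have hintB : IntervalIntegrable (fun u : ℝ => ((u - 1/2 : ℝ) : ℂ) * f' u) volume 0 1 := by
    apply ContinuousOn.intervalIntegrable
    rw [uIcc_of_le zero_le_one]
    exact hcoef.continuousOn.mul hf'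
  have hintf : IntervalIntegrable f volume 0 1 := by
    apply ContinuousOn.intervalIntegrable
    rwa [uIcc_of_le zero_le_one]
  have key := intervalIntegral.integral_eq_sub_of_hasDerivAt_of_le zero_le_one
    (hcoef.continuousOn.mul hfc) hG' (hintf.add hintB)
  rw [intervalIntegral.integral_add hintf hintB] at key
  rw [intervalIntegral.integral_of_le zero_le_one, intervalIntegral.integral_of_le zero_le_one,
    integral_Ioc_eq_integral_Ioo, integral_Ioc_eq_integral_Ioo] at key
  rw [key]
  push_cast [Pi.mul_apply]
  ring

lemma remainder_est {z : ℂ} (hz : 0 < z.re) {r r' : ℝ → ℂ} {M : ℝ}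
    (hrd : ∀ u ∈ Icc (0:ℝ) 1, HasDerivWithinAt r (r' u) (Icc 0 1) u)
    (hM : ∀ u ∈ Icc (0:ℝ) 1, ‖r' u‖ ≤ M)
    (h0 : r 0 = 0) (h1 : r 1 = 0) :
    ‖∫ u in Ioo (0:ℝ) 1, r u * ((u * (1 - u) : ℝ) : ℂ) ^ (z - 1)‖ ≤ 2 * M := by
  have hM0 : 0 ≤ M := le_trans (norm_nonneg _) (hM 0 ⟨le_refl 0, zero_le_one⟩)
  have hbound : ∀ u ∈ Ioo (0:ℝ) 1, ‖r u * ((u * (1 - u) : ℝ) : ℂ) ^ (z - 1)‖ ≤ 2 * M := by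
    intro u hu
    have hu0 : (0:ℝ) < u := hu.1
    have hu1 : u < 1 := hu.2
    have huI : u ∈ Icc (0:ℝ) 1 := Ioo_subset_Icc_self hu
    have hb1 : ‖r u‖ ≤ M * u := by
      have := (convex_Icc (0:ℝ) 1).norm_image_sub_le_of_norm_hasDerivWithin_le hrd hM
        (left_mem_Icc.2 zero_le_one) huI
      simpa [h0, abs_of_pos hu0] using this
    have hb2 : ‖r u‖ ≤ M * (1 - u) := by
      have := (convex_Icc (0:ℝ) 1).norm_image_sub_le_of_norm_hasDerivWithin_le hrd hM
        (right_mem_Icc.2 zero_le_one) huI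
      simpa [h1, abs_of_neg (by linarith : u - 1 < 0)] using this
    have hb : ‖r u‖ ≤ 2 * M * (u * (1 - u)) := by
      rcases le_or_gt u (1/2) with h | h
      · nlinarith
      · nlinarith
    have hpos : (0:ℝ) < u * (1 - u) := by nlinarith
    rw [norm_mul, kernel_norm hu]
    calc ‖r u‖ * (u * (1 - u)) ^ (z.re - 1)
        ≤ (2 * M * (u * (1 - u))) * (u * (1 - u)) ^ (z.re - 1) :=
          mul_le_mul_of_nonneg_right hb (Real.rpow_nonneg hpos.le _)
      _ = 2 * M * (u * (1 - u)) ^ z.re := by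
          rw [show z.re = 1 + (z.re - 1) by ring, Real.rpow_add hpos, Real.rpow_one]; ring
      _ ≤ 2 * M * 1 := by
          refine mul_le_mul_of_nonneg_left ?_ (by linarith)
          exact Real.rpow_le_one hpos.le (by nlinarith) (by linarith [hz])
      _ = 2 * M := mul_one _
  have hfin : volume (Ioo (0:ℝ) 1) < ⊤ := by
    rw [Real.volume_Ioo]; exact ENNReal.ofReal_lt_top
  have := norm_setIntegral_le_of_norm_le_const hfin hbound
  simpa [Real.volume_Ioo] using this

/-- For continuously differentiable `f : [0,1] → ℂ` (with derivative `f'`),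
`z β[f](z) → 2∫₀¹ f + 2∫₀¹ (u−1/2) f'(u) du` as `z → 0` in the right half-plane. -/
theorem betaFn_residue_at_zero
    (f f' : ℝ → ℂ)
    (hderiv : ∀ u ∈ Icc (0:ℝ) 1, HasDerivWithinAt f (f' u) (Icc 0 1) u)
    (hf' : ContinuousOn f' (Icc 0 1)) :
    Tendsto (fun z : ℂ => z * betaFn f z) (𝓝[{z : ℂ | 0 < z.re}] 0)
      (𝓝 (2 * (∫ u in Ioo (0:ℝ) 1, f u)
          + 2 * ∫ u in Ioo (0:ℝ) 1, ((u - 1/2 : ℝ) : ℂ) * f' u)) := by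
  have hfc : ContinuousOn f (Icc (0:ℝ) 1) := fun u hu => (hderiv u hu).continuousWithinAt
  set r : ℝ → ℂ := fun u => f u - (f 0 + (f 1 - f 0) * ((u : ℝ) : ℂ)) with hrdef
  set q : ℝ → ℂ := fun u => f' u - (f 1 - f 0) with hqdef
  have hrd : ∀ u ∈ Icc (0:ℝ) 1, HasDerivWithinAt r (q u) (Icc 0 1) u := by
    intro u hu
    have h1 : HasDerivAt (fun v : ℝ => ((v : ℝ) : ℂ)) 1 u := by
      exact Complex.ofRealCLM.hasDerivAt (x := u)
    have haff : HasDerivAt (fun v : ℝ => f 0 + (f 1 - f 0) * ((v : ℝ) : ℂ)) (f 1 - f 0) u := by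
      simpa using ((h1.const_mul (f 1 - f 0)).const_add (f 0))
    exact (hderiv u hu).sub haff.hasDerivWithinAt
  have hr0 : r 0 = 0 := by simp [hrdef]
  have hr1 : r 1 = 0 := by simp [hrdef]
  have hrc : ContinuousOn r (Icc (0:ℝ) 1) := fun u hu => (hrd u hu).continuousWithinAt
  obtain ⟨M, hM⟩ := isCompact_Icc.exists_bound_of_continuousOn
    (f := q) (hf'.sub continuousOn_const)
  -- decomposition
  have hdecomp : ∀ z : ℂ, 0 < z.re → z * betaFn f z
      = (f 0 + f 1) * (Complex.Gamma (z + 1) ^ 2 / Complex.Gamma (z + z + 1))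
        + z * ∫ u in Ioo (0:ℝ) 1, r u * ((u * (1 - u) : ℝ) : ℂ) ^ (z - 1) := by
    intro z hz
    have hint1 : IntegrableOn
        (fun u : ℝ => ((1 - u : ℝ) : ℂ) * ((u * (1 - u) : ℝ) : ℂ) ^ (z - 1)) (Ioo (0:ℝ) 1) :=
      mulKernel_integrableOn hz
        ((Complex.continuous_ofReal.comp (continuous_const.sub continuous_id)).continuousOn)
    have hint2 : IntegrableOn
        (fun u : ℝ => ((u : ℝ) : ℂ) * ((u * (1 - u) : ℝ) : ℂ) ^ (z - 1)) (Ioo (0:ℝ) 1) :=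
      mulKernel_integrableOn hz (Complex.continuous_ofReal.continuousOn)
    have hintr : IntegrableOn
        (fun u : ℝ => r u * ((u * (1 - u) : ℝ) : ℂ) ^ (z - 1)) (Ioo (0:ℝ) 1) :=
      mulKernel_integrableOn hz hrc
    have hsplit : betaFn f z
        = f 0 * (∫ u in Ioo (0:ℝ) 1, ((1 - u : ℝ) : ℂ) * ((u * (1 - u) : ℝ) : ℂ) ^ (z - 1))
          + f 1 * (∫ u in Ioo (0:ℝ) 1, ((u : ℝ) : ℂ) * ((u * (1 - u) : ℝ) : ℂ) ^ (z - 1))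
          + ∫ u in Ioo (0:ℝ) 1, r u * ((u * (1 - u) : ℝ) : ℂ) ^ (z - 1) := by
      have hsum : betaFn f z = ∫ u in Ioo (0:ℝ) 1,
          (f 0 * (((1 - u : ℝ) : ℂ) * ((u * (1 - u) : ℝ) : ℂ) ^ (z - 1))
            + f 1 * (((u : ℝ) : ℂ) * ((u * (1 - u) : ℝ) : ℂ) ^ (z - 1))
            + r u * ((u * (1 - u) : ℝ) : ℂ) ^ (z - 1)) := by
        refine setIntegral_congr_fun measurableSet_Ioo (fun u hu => ?_)
        simp only [hrdef]
        push_cast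
        ring
      have hadd12 : IntegrableOn
          (fun u : ℝ => f 0 * (((1 - u : ℝ) : ℂ) * ((u * (1 - u) : ℝ) : ℂ) ^ (z - 1))
            + f 1 * (((u : ℝ) : ℂ) * ((u * (1 - u) : ℝ) : ℂ) ^ (z - 1))) (Ioo (0:ℝ) 1) :=
        (hint1.const_mul (f 0)).add (hint2.const_mul (f 1))
      rw [hsum, integral_add hadd12 hintr,
        integral_add (hint1.const_mul (f 0)) (hint2.const_mul (f 1)),
        integral_const_mul, integral_const_mul]
    rw [hsplit, B1_eq, B2_eq, Complex.betaIntegral_symm z (z + 1)]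
    linear_combination (f 0 + f 1) * zmulBeta hz
  -- limits
  have hGlim : Tendsto (fun z : ℂ =>
      (f 0 + f 1) * (Complex.Gamma (z + 1) ^ 2 / Complex.Gamma (z + z + 1)))
      (𝓝[{z : ℂ | 0 < z.re}] 0) (𝓝 ((f 0 + f 1) * 1)) := by
    have h : Tendsto (fun z : ℂ => Complex.Gamma (z + 1) ^ 2 / Complex.Gamma (z + z + 1))
        (𝓝[{z : ℂ | 0 < z.re}] 0) (𝓝 1) := by
      have := hG_continuousAt.tendsto.mono_left
        (nhdsWithin_le_nhds (s := {z : ℂ | 0 < z.re}))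
      simpa [Complex.Gamma_one] using this
    exact h.const_mul _
  have hRlim : Tendsto (fun z : ℂ =>
      z * ∫ u in Ioo (0:ℝ) 1, r u * ((u * (1 - u) : ℝ) : ℂ) ^ (z - 1))
      (𝓝[{z : ℂ | 0 < z.re}] 0) (𝓝 0) := by
    refine squeeze_zero_norm' (a := fun z : ℂ => ‖z‖ * (2 * M)) ?_ ?_
    · filter_upwards [self_mem_nhdsWithin] with z hz
      rw [norm_mul]
      exact mul_le_mul_of_nonneg_left (remainder_est hz hrd hM hr0 hr1) (norm_nonneg _)
    · have : Tendsto (fun z : ℂ => ‖z‖) (𝓝[{z : ℂ | 0 < z.re}] 0) (𝓝 0) := by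
        have := (continuous_norm.tendsto (0:ℂ)).mono_left
          (nhdsWithin_le_nhds (s := {z : ℂ | 0 < z.re}))
        simpa using this
      simpa using this.mul_const (2 * M)
  have hsum := hGlim.add hRlim
  rw [add_zero] at hsum
  have hval : (f 0 + f 1) * 1
      = 2 * (∫ u in Ioo (0:ℝ) 1, f u)
        + 2 * ∫ u in Ioo (0:ℝ) 1, ((u - 1/2 : ℝ) : ℂ) * f' u := by
    have hibp := ibp f f' hderiv hf'
    rw [mul_one]
    linear_combination 2 * hibp.symm
  rw [hval] at hsum
  refine hsum.congr' ?_
  filter_upwards [self_mem_nhdsWithin] with z hz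
  exact (hdecomp z hz).symm
end

section
/- For every natural number n, the function z ↦ (z + n)·Γ(z)²/Γ(2z) tends to 2·C(2n, n) as z → −n within the punctured neighborhood (i.e., along z ≠ −n), where Γ is the complex Gamma function and C(2n, n) is the binomial coefficient. In other words, the diagonal Beta function B(z,z) = Γ(z)²/Γ(2z) has a simple pole at each negative integer −n with limit of (z+n)B(z,z) equal to 2·C(2n,n). -/
open Filter Topology

/-- Residue of Γ at `-m`: `(z+m)Γ(z) → (-1)^m / m!` as `z → -m`, `z ≠ -m`. -/
lemma gamma_residue (m : ℕ) :
    Tendsto (fun z : ℂ => (z + (m:ℂ)) * Complex.Gamma z)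
      (𝓝[≠] (-(m:ℂ))) (𝓝 ((-1) ^ m / (m.factorial : ℂ))) := by
  induction m with
  | zero =>
      simpa using Complex.tendsto_self_mul_Gamma_nhds_zero
  | succ m ih =>
      have hmap : Tendsto (fun z : ℂ => z + 1) (𝓝[≠] (-((m+1:ℕ):ℂ))) (𝓝[≠] (-(m:ℂ))) := by
        apply tendsto_nhdsWithin_of_tendsto_nhds_of_eventually_within
        · have h : Tendsto (fun z : ℂ => z + 1) (𝓝 (-((m+1:ℕ):ℂ))) (𝓝 (-((m+1:ℕ):ℂ) + 1)) :=
            (continuous_id.add continuous_const).tendsto _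
          have he : -((m+1:ℕ):ℂ) + 1 = -(m:ℂ) := by push_cast; ring
          rw [he] at h
          exact h.mono_left nhdsWithin_le_nhds
        · filter_upwards [self_mem_nhdsWithin] with z hz
          simp only [Set.mem_compl_iff, Set.mem_singleton_iff] at hz ⊢
          intro h
          apply hz
          have : z = -((m+1:ℕ):ℂ) := by push_cast at h ⊢; linear_combination h
          exact this
      have h1 : Tendsto (fun z : ℂ => (z + 1 + (m:ℂ)) * Complex.Gamma (z + 1))
          (𝓝[≠] (-((m+1:ℕ):ℂ))) (𝓝 ((-1) ^ m / (m.factorial : ℂ))) := ih.comp hmap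
      have hne0 : (-((m+1:ℕ):ℂ)) ≠ 0 :=
        neg_ne_zero.mpr (Nat.cast_ne_zero.mpr (Nat.succ_ne_zero m))
      have h2 : Tendsto (fun z : ℂ => (1:ℂ) / z) (𝓝[≠] (-((m+1:ℕ):ℂ)))
          (𝓝 (1 / (-((m+1:ℕ):ℂ)))) :=
        (Tendsto.div tendsto_const_nhds tendsto_id hne0).mono_left nhdsWithin_le_nhds
      have key := h1.mul h2
      have heq : (fun z : ℂ => (z + 1 + (m:ℂ)) * Complex.Gamma (z + 1) * (1 / z))
          =ᶠ[𝓝[≠] (-((m+1:ℕ):ℂ))]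
          (fun z : ℂ => (z + ((m+1:ℕ):ℂ)) * Complex.Gamma z) := by
        have hne : ∀ᶠ z : ℂ in 𝓝[≠] (-((m+1:ℕ):ℂ)), z ≠ 0 := by
          apply eventually_nhdsWithin_of_eventually_nhds
          exact eventually_ne_nhds hne0
        filter_upwards [hne] with z hz
        rw [Complex.Gamma_add_one z hz]
        field_simp
        push_cast
        ring
      have hval : (-1:ℂ) ^ m / (m.factorial : ℂ) * (1 / (-((m+1:ℕ):ℂ)))
          = (-1) ^ (m+1) / ((m+1).factorial : ℂ) := by
        rw [Nat.factorial_succ, pow_succ]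
        have h2 : ((m.factorial : ℂ)) ≠ 0 := Nat.cast_ne_zero.mpr m.factorial_ne_zero
        have h1 : ((m:ℂ) + 1) ≠ 0 := Nat.cast_add_one_ne_zero m
        push_cast
        have hd : ((m.factorial : ℂ)) * -((m:ℂ)+1) ≠ 0 := mul_ne_zero h2 (neg_ne_zero.mpr h1)
        have hd2 : (((m:ℂ)+1) * (m.factorial : ℂ)) ≠ 0 := mul_ne_zero h1 h2
        rw [div_mul_div_comm, div_eq_div_iff hd hd2]
        ring
      rw [← hval]
      exact key.congr' heq

/-- The diagonal Beta function `B(z,z) = Γ(z)²/Γ(2z)` has a simple pole at each `−n`, `n ∈ ℕ`,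
with `(z+n) B(z,z) → 2 C(2n,n)` as `z → −n`, `z ≠ −n`. -/
theorem diagonal_beta_pole_at_neg_nat (n : ℕ) :
    Tendsto (fun z : ℂ => (z + (n:ℂ)) * (Complex.Gamma z) ^ 2 / Complex.Gamma (2 * z))
      (𝓝[≠] (-(n:ℂ))) (𝓝 (2 * (Nat.choose (2 * n) n : ℂ))) := by
  have hA : Tendsto (fun z : ℂ => (z + (n:ℂ)) * Complex.Gamma z)
      (𝓝[≠] (-(n:ℂ))) (𝓝 ((-1) ^ n / (n.factorial : ℂ))) := gamma_residue n
  have hmap : Tendsto (fun z : ℂ => 2 * z) (𝓝[≠] (-(n:ℂ))) (𝓝[≠] (-((2*n:ℕ):ℂ))) := by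
    apply tendsto_nhdsWithin_of_tendsto_nhds_of_eventually_within
    · have h : Tendsto (fun z : ℂ => 2 * z) (𝓝 (-(n:ℂ))) (𝓝 (2 * -(n:ℂ))) :=
        (continuous_const.mul continuous_id).tendsto _
      have he : (2:ℂ) * -(n:ℂ) = -((2*n:ℕ):ℂ) := by push_cast; ring
      rw [he] at h
      exact h.mono_left nhdsWithin_le_nhds
    · filter_upwards [self_mem_nhdsWithin] with z hz
      simp only [Set.mem_compl_iff, Set.mem_singleton_iff] at hz ⊢
      intro h
      apply hz
      have h' : (2:ℂ) * z = 2 * -(n:ℂ) := by rw [h]; push_cast; ring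
      exact mul_left_cancel₀ two_ne_zero h'
  -- B(z) = (z+n)Γ(2z) → 1/(2(2n)!)
  have hB0 : Tendsto (fun w : ℂ => (w + ((2*n:ℕ):ℂ)) * Complex.Gamma w)
      (𝓝[≠] (-((2*n:ℕ):ℂ))) (𝓝 ((-1) ^ (2*n) / ((2*n).factorial : ℂ))) := gamma_residue (2*n)
  have hB1 := (hB0.comp hmap).mul (tendsto_const_nhds (x := (1:ℂ)/2))
  have hB : Tendsto (fun z : ℂ => (z + (n:ℂ)) * Complex.Gamma (2 * z))
      (𝓝[≠] (-(n:ℂ))) (𝓝 ((-1) ^ (2*n) / ((2*n).factorial : ℂ) * (1/2))) := by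
    apply hB1.congr
    intro z
    simp only [Function.comp]
    push_cast
    ring
  have hBval : ((-1:ℂ)) ^ (2*n) / ((2*n).factorial : ℂ) * (1/2) ≠ 0 := by
    apply mul_ne_zero
    · apply div_ne_zero
      · exact pow_ne_zero _ (neg_ne_zero.mpr one_ne_zero)
      · exact Nat.cast_ne_zero.mpr (2*n).factorial_ne_zero
    · norm_num
  have key := ((hA.mul hA).div hB hBval)
  have heq : (fun z : ℂ => ((z + (n:ℂ)) * Complex.Gamma z) * ((z + (n:ℂ)) * Complex.Gamma z)
        / ((z + (n:ℂ)) * Complex.Gamma (2 * z)))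
      =ᶠ[𝓝[≠] (-(n:ℂ))]
      (fun z : ℂ => (z + (n:ℂ)) * (Complex.Gamma z) ^ 2 / Complex.Gamma (2 * z)) := by
    filter_upwards [self_mem_nhdsWithin] with z hz
    simp only [Set.mem_compl_iff, Set.mem_singleton_iff] at hz
    have hzn : z + (n:ℂ) ≠ 0 := by
      intro h; apply hz; linear_combination h
    rw [show (z + (n:ℂ)) * Complex.Gamma z * ((z + (n:ℂ)) * Complex.Gamma z)
        = (z + (n:ℂ)) * ((z + (n:ℂ)) * Complex.Gamma z ^ 2) from by ring,
      mul_div_mul_left _ _ hzn]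
  have hlim : ((-1:ℂ)) ^ n / (n.factorial : ℂ) * ((-1) ^ n / (n.factorial : ℂ))
      / ((-1) ^ (2*n) / ((2*n).factorial : ℂ) * (1/2)) = 2 * (Nat.choose (2 * n) n : ℂ) := by
    have hc : (Nat.choose (2*n) n : ℂ) * (n.factorial : ℂ) * (n.factorial : ℂ)
        = ((2*n).factorial : ℂ) := by
      have := Nat.choose_mul_factorial_mul_factorial (Nat.le_mul_of_pos_left n (by norm_num) : n ≤ 2*n)
      have h2 : 2*n - n = n := by omega
      rw [h2] at this
      exact_mod_cast this
    have hnf : ((n.factorial : ℂ)) ≠ 0 := Nat.cast_ne_zero.mpr n.factorial_ne_zero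
    have h2nf : (((2*n).factorial : ℂ)) ≠ 0 := Nat.cast_ne_zero.mpr (2*n).factorial_ne_zero
    have hpow : ((-1:ℂ)) ^ (2*n) = 1 := by
      rw [pow_mul]; norm_num
    rw [hpow, ← hc]
    have hsq : ((-1:ℂ)) ^ n * (-1:ℂ) ^ n = 1 := by
      rw [← pow_add]
      have : n + n = 2 * n := by ring
      rw [this, pow_mul]; norm_num
    field_simp
    linear_combination (Nat.choose (2*n) n : ℂ) * hsq
  rw [← hlim]
  exact key.congr' heq
end
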